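/- Let (X,d) be a metric space, μ a Borel measure on X, x₀ ∈ X, r(x) = d(x₀,x), and B(x₀,t) the open ball of radius t about x₀. Let α > 0 and assume μ has (2α+2)-subpolynomial volume growth, i.e. limsup_{R→∞} μ(B(x₀,R))/R^{2α+2} = 0. Then for every ε > 0, lim_{Q→∞} (1 + εQ)^{-α} ∫_{B(x₀,Q)} (1 + ε r(x))^{-α-2} dμ(x) = 0. -/

import Mathlib

open Real MeasureTheory Filter

private lemma exists_pow_between {R₀ Q : ℝ} (h1 : 0 < R₀) (h2 : R₀ ≤ Q) :
    ∃ N : ℕ, Q ≤ R₀ * 2 ^ N ∧ R₀ * 2 ^ N ≤ 2 * Q := by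
  have hQ0 : 0 < Q := lt_of_lt_of_le h1 h2
  have hex : ∃ N : ℕ, Q ≤ R₀ * 2 ^ N := by
    obtain ⟨n, hn⟩ := pow_unbounded_of_one_lt (Q / R₀) (one_lt_two (α := ℝ))
    refine ⟨n, ?_⟩
    have := (div_lt_iff₀ h1).mp hn
    nlinarith
  classical
  refine ⟨Nat.find hex, Nat.find_spec hex, ?_⟩
  rcases hc : Nat.find hex with _ | k
  · simp only [pow_zero, mul_one]
    linarith
  · have hk : ¬ (Q ≤ R₀ * 2 ^ k) := Nat.find_min hex (by omega)
    push_neg at hk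
    have : R₀ * 2 ^ (k + 1) = 2 * (R₀ * 2 ^ k) := by ring
    linarith

private lemma integral_ball_dyadic {X : Type*} [MetricSpace X] [MeasurableSpace X] [BorelSpace X]
    (μ : Measure X) (x₀ : X) (g : X → ℝ) (c : ℝ → ℝ)
    (hfin : ∀ t : ℝ, μ (Metric.ball x₀ t) ≠ ⊤)
    (hmeas : AEStronglyMeasurable g μ)
    (hg1 : ∀ x, ‖g x‖ ≤ 1)
    (hg0 : ∀ x, 0 ≤ g x)
    {R₀ : ℝ} (hR₀ : 0 < R₀)
    (hc : ∀ t : ℝ, 0 < t → ∀ x : X, t ≤ dist x₀ x → g x ≤ c t)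
    (hc0 : ∀ t : ℝ, 0 < t → 0 ≤ c t) :
    ∀ N : ℕ, ∫ x in Metric.ball x₀ (R₀ * 2 ^ N), g x ∂μ ≤
      (μ (Metric.ball x₀ R₀)).toReal +
      ∑ j ∈ Finset.range N, c (R₀ * 2 ^ j) * (μ (Metric.ball x₀ (R₀ * 2 ^ (j + 1)))).toReal := by
  have hint : ∀ t : ℝ, IntegrableOn g (Metric.ball x₀ t) μ := fun t =>
    Measure.integrableOn_of_bounded (hfin t) hmeas (ae_of_all _ hg1)
  intro N
  induction N with
  | zero =>
      simp only [pow_zero, mul_one, Finset.range_zero, Finset.sum_empty, add_zero]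
      calc ∫ x in Metric.ball x₀ R₀, g x ∂μ
          ≤ ‖∫ x in Metric.ball x₀ R₀, g x ∂μ‖ := le_norm_self _
        _ ≤ 1 * (μ (Metric.ball x₀ R₀)).toReal :=
            norm_setIntegral_le_of_norm_le_const ((hfin R₀).lt_top)
              (fun x _ => hg1 x)
        _ = (μ (Metric.ball x₀ R₀)).toReal := one_mul _
  | succ N ih =>
      have hab : R₀ * 2 ^ N ≤ R₀ * 2 ^ (N + 1) := by
        have : (2:ℝ) ^ N ≤ 2 ^ (N + 1) := by
          apply pow_le_pow_right₀ (by norm_num) (by omega)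
        nlinarith
      set a := R₀ * 2 ^ N with ha
      set b := R₀ * 2 ^ (N + 1) with hb
      have ha0 : 0 < a := by rw [ha]; positivity
      have hsplit : Metric.ball x₀ b =
          Metric.ball x₀ a ∪ (Metric.ball x₀ b \ Metric.ball x₀ a) :=
        (Set.union_diff_cancel (Metric.ball_subset_ball hab)).symm
      have hdiffint : IntegrableOn g (Metric.ball x₀ b \ Metric.ball x₀ a) μ :=
        (hint b).mono_set Set.diff_subset
      have hμdiff : μ (Metric.ball x₀ b \ Metric.ball x₀ a) < ⊤ :=
        lt_of_le_of_lt (measure_mono Set.diff_subset) (hfin b).lt_top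
      have hshell : ∫ x in Metric.ball x₀ b \ Metric.ball x₀ a, g x ∂μ ≤
          c a * (μ (Metric.ball x₀ b)).toReal := by
        have hbound : ∀ x ∈ Metric.ball x₀ b \ Metric.ball x₀ a, ‖g x‖ ≤ c a := by
          rintro x ⟨_, hx⟩
          have hax : a ≤ dist x₀ x := by
            rw [Metric.mem_ball, dist_comm] at hx
            linarith [not_lt.mp hx]
          calc ‖g x‖ = g x := Real.norm_of_nonneg (hg0 x)
            _ ≤ c a := hc a ha0 x hax
        calc ∫ x in Metric.ball x₀ b \ Metric.ball x₀ a, g x ∂μ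
            ≤ ‖∫ x in Metric.ball x₀ b \ Metric.ball x₀ a, g x ∂μ‖ := le_norm_self _
          _ ≤ c a * (μ (Metric.ball x₀ b \ Metric.ball x₀ a)).toReal :=
              norm_setIntegral_le_of_norm_le_const hμdiff hbound
          _ ≤ c a * (μ (Metric.ball x₀ b)).toReal := by
              apply mul_le_mul_of_nonneg_left _ (hc0 a ha0)
              exact ENNReal.toReal_mono (hfin b) (measure_mono Set.diff_subset)
      have hunion : ∫ x in Metric.ball x₀ b, g x ∂μ =
          ∫ x in Metric.ball x₀ a, g x ∂μ +
          ∫ x in Metric.ball x₀ b \ Metric.ball x₀ a, g x ∂μ := by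
        have h0 := MeasureTheory.setIntegral_union (μ := μ) (f := g) (Set.disjoint_sdiff_right)
          (Metric.isOpen_ball.measurableSet.diff Metric.isOpen_ball.measurableSet)
          (hint a) hdiffint
        rw [← hsplit] at h0
        exact h0
      rw [Finset.sum_range_succ, ← ha, ← hb, hunion]
      linarith

/-- Under `(2α+2)`-subpolynomial volume growth (`limsup_{R→∞} μ(B(x₀,R))/R^{2α+2} = 0`),
for every `ε > 0` one has `(1+εQ)^{-α} ∫_{B(x₀,Q)} (1+εr)^{-α-2} dμ → 0` as `Q → ∞`. -/
theorem stmt_7 {X : Type*} [MetricSpace X] [MeasurableSpace X] [BorelSpace X]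
    (μ : Measure X) (x₀ : X) (α : ℝ) (hα : 0 < α)
    (hvol : Filter.limsup
        (fun R : ℝ => μ (Metric.ball x₀ R) / ENNReal.ofReal (R ^ (2 * α + 2)))
        Filter.atTop = 0) :
    ∀ ε > 0,
      Tendsto
        (fun Q : ℝ =>
          (1 + ε * Q) ^ (-α) *
            ∫ x in Metric.ball x₀ Q, (1 + ε * dist x₀ x) ^ (-α - 2) ∂μ)
        atTop (nhds 0) := by
  intro ε hε
  set g : X → ℝ := fun x => (1 + ε * dist x₀ x) ^ (-α - 2) with hgdef
  have hbase : ∀ x : X, (1:ℝ) ≤ 1 + ε * dist x₀ x := fun x =>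
    le_add_of_nonneg_right (mul_nonneg hε.le dist_nonneg)
  have hg0 : ∀ x, 0 ≤ g x := fun x => Real.rpow_nonneg (by linarith [hbase x]) _
  have hg1 : ∀ x, ‖g x‖ ≤ 1 := by
    intro x
    rw [Real.norm_of_nonneg (hg0 x)]
    calc g x ≤ (1:ℝ) ^ (-α - 2) :=
          Real.rpow_le_rpow_of_nonpos one_pos (hbase x) (by linarith)
      _ = 1 := Real.one_rpow _
  have hcont : Continuous g := by
    apply Continuous.rpow_const
    · exact continuous_const.add (continuous_const.mul (continuous_const.dist continuous_id))
    · intro x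
      exact Or.inl (ne_of_gt (lt_of_lt_of_le one_pos (hbase x)))
  -- volume growth extraction
  have hμ : ∀ δ : ℝ, 0 < δ → ∃ R₀ : ℝ, 1 ≤ R₀ ∧ ∀ R, R₀ ≤ R →
      μ (Metric.ball x₀ R) ≤ ENNReal.ofReal (δ * R ^ (2 * α + 2)) := by
    intro δ hδ
    have h1 : Filter.limsup
        (fun R : ℝ => μ (Metric.ball x₀ R) / ENNReal.ofReal (R ^ (2 * α + 2)))
        Filter.atTop < ENNReal.ofReal δ := by
      rw [hvol]; exact ENNReal.ofReal_pos.mpr hδ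
    have h2 := eventually_lt_of_limsup_lt h1
    rw [eventually_atTop] at h2
    obtain ⟨R₁, hR₁⟩ := h2
    refine ⟨max R₁ 1, le_max_right _ _, fun R hR => ?_⟩
    have hR1 : (1:ℝ) ≤ R := le_trans (le_max_right _ _) hR
    have h3 := hR₁ R (le_trans (le_max_left _ _) hR)
    have hpow : (0:ℝ) < R ^ (2 * α + 2) := Real.rpow_pos_of_pos (by linarith) _
    rw [ENNReal.div_lt_iff (Or.inl (by simp only [ne_eq, ENNReal.ofReal_eq_zero, not_le]; exact hpow))
      (Or.inl ENNReal.ofReal_ne_top)] at h3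
    calc μ (Metric.ball x₀ R) ≤ ENNReal.ofReal δ * ENNReal.ofReal (R ^ (2 * α + 2)) := h3.le
      _ = ENNReal.ofReal (δ * R ^ (2 * α + 2)) := (ENNReal.ofReal_mul hδ.le).symm
  have hfin : ∀ t : ℝ, μ (Metric.ball x₀ t) ≠ ⊤ := by
    obtain ⟨R₁, hR₁1, hR₁⟩ := hμ 1 one_pos
    intro t
    have hsub : μ (Metric.ball x₀ t) ≤ μ (Metric.ball x₀ (max t R₁)) :=
      measure_mono (Metric.ball_subset_ball (le_max_left _ _))
    exact ne_top_of_le_ne_top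
      (lt_of_le_of_lt (hR₁ _ (le_max_right _ _)) ENNReal.ofReal_lt_top).ne hsub
  have hint : ∀ t : ℝ, IntegrableOn g (Metric.ball x₀ t) μ := fun t =>
    Measure.integrableOn_of_bounded (hfin t) hcont.aestronglyMeasurable (ae_of_all _ hg1)
  -- constants
  have h2α : (1:ℝ) < 2 ^ α := by
    rw [show (1:ℝ) = (2:ℝ) ^ (0:ℝ) by simp]
    exact Real.rpow_lt_rpow_of_exponent_lt one_lt_two hα
  have h2α0 : (0:ℝ) < 2 ^ α - 1 := by linarith
  set K : ℝ := ε ^ (-(2 * α + 2)) * 2 ^ (3 * α + 2) / (2 ^ α - 1) with hKdef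
  have hK0 : 0 < K := by
    apply div_pos _ h2α0
    exact mul_pos (Real.rpow_pos_of_pos hε _) (Real.rpow_pos_of_pos two_pos _)
  rw [Metric.tendsto_nhds]
  intro η hη
  set δ : ℝ := (η / 2) / K with hδdef
  have hδ : 0 < δ := div_pos (by linarith) hK0
  obtain ⟨R₀, hR₀1, hR₀⟩ := hμ δ hδ
  have hR₀0 : (0:ℝ) < R₀ := by linarith
  set M : ℝ := (μ (Metric.ball x₀ R₀)).toReal with hMdef
  have hM0 : 0 ≤ M := ENNReal.toReal_nonneg
  -- first term tends to 0
  have htend : Tendsto (fun Q : ℝ => (1 + ε * Q) ^ (-α) * M) atTop (nhds 0) := by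
    have h1 : Tendsto (fun Q : ℝ => 1 + ε * Q) atTop atTop :=
      tendsto_atTop_add_const_left _ 1 (Tendsto.const_mul_atTop hε tendsto_id)
    have h2 : Tendsto (fun Q : ℝ => (1 + ε * Q) ^ (-α)) atTop (nhds 0) :=
      (tendsto_rpow_neg_atTop hα).comp h1
    simpa using h2.mul_const M
  have hev1 : ∀ᶠ Q : ℝ in atTop, (1 + ε * Q) ^ (-α) * M < η / 2 :=
    htend.eventually_lt_const (by linarith)
  filter_upwards [hev1, eventually_ge_atTop R₀, eventually_ge_atTop 1] with Q hQsmall hQR hQ1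
  have hQ0 : (0:ℝ) < Q := by linarith
  -- the dyadic cover
  obtain ⟨N, hN1, hN2⟩ := exists_pow_between hR₀0 hQR
  -- the pointwise decay bound
  set c : ℝ → ℝ := fun t => (1 + ε * t) ^ (-α - 2) with hcdef
  have hc : ∀ t : ℝ, 0 < t → ∀ x : X, t ≤ dist x₀ x → g x ≤ c t := by
    intro t ht x hx
    apply Real.rpow_le_rpow_of_nonpos (by nlinarith) _ (by linarith)
    have : ε * t ≤ ε * dist x₀ x := mul_le_mul_of_nonneg_left hx hε.le
    linarith
  have hc0 : ∀ t : ℝ, 0 < t → 0 ≤ c t := fun t ht => Real.rpow_nonneg (by nlinarith) _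
  have hkey := integral_ball_dyadic μ x₀ g c hfin hcont.aestronglyMeasurable hg1 hg0 hR₀0 hc hc0 N
  have hmono : ∫ x in Metric.ball x₀ Q, g x ∂μ ≤
      ∫ x in Metric.ball x₀ (R₀ * 2 ^ N), g x ∂μ :=
    setIntegral_mono_set (hint _) (ae_of_all _ hg0)
      ((Metric.ball_subset_ball hN1).eventuallyLE)
  -- bound each summand
  set D : ℝ := δ * ε ^ (-α - 2) * R₀ ^ α * 2 ^ (2 * α + 2) with hDdef
  have hD0 : 0 ≤ D := by
    apply mul_nonneg (mul_nonneg (mul_nonneg hδ.le _) _) _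
    · exact (Real.rpow_pos_of_pos hε _).le
    · exact (Real.rpow_pos_of_pos hR₀0 _).le
    · exact (Real.rpow_pos_of_pos two_pos _).le
  have hterm : ∀ j : ℕ, c (R₀ * 2 ^ j) * (μ (Metric.ball x₀ (R₀ * 2 ^ (j + 1)))).toReal ≤
      D * (2 ^ α) ^ j := by
    intro j
    have h2j : (0:ℝ) < 2 ^ j := by positivity
    have htj : (0:ℝ) < R₀ * 2 ^ j := by positivity
    have hle1 : c (R₀ * 2 ^ j) ≤ (ε * (R₀ * 2 ^ j)) ^ (-α - 2) := by
      apply Real.rpow_le_rpow_of_nonpos (by positivity) (by linarith) (by linarith)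
    have hc0' : 0 ≤ c (R₀ * 2 ^ j) := hc0 _ htj
    have hRj : R₀ ≤ R₀ * 2 ^ (j + 1) := by
      have h1 : (1:ℝ) ≤ 2 ^ (j + 1) := one_le_pow₀ (by norm_num)
      nlinarith
    have hle2 : (μ (Metric.ball x₀ (R₀ * 2 ^ (j + 1)))).toReal ≤
        δ * (R₀ * 2 ^ (j + 1)) ^ (2 * α + 2) := by
      apply ENNReal.toReal_le_of_le_ofReal (by positivity)
      exact hR₀ _ hRj
    have hμ0 : 0 ≤ (μ (Metric.ball x₀ (R₀ * 2 ^ (j + 1)))).toReal := ENNReal.toReal_nonneg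
    calc c (R₀ * 2 ^ j) * (μ (Metric.ball x₀ (R₀ * 2 ^ (j + 1)))).toReal
        ≤ (ε * (R₀ * 2 ^ j)) ^ (-α - 2) * (δ * (R₀ * 2 ^ (j + 1)) ^ (2 * α + 2)) := by
          apply mul_le_mul hle1 hle2 hμ0 (by positivity)
      _ = D * (2 ^ α) ^ j := by
          rw [Real.mul_rpow hε.le htj.le, Real.mul_rpow hR₀0.le h2j.le,
            Real.mul_rpow hR₀0.le (by positivity : (0:ℝ) ≤ 2 ^ (j + 1))]
          rw [← Real.rpow_natCast 2 j, ← Real.rpow_natCast 2 (j + 1),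
            ← Real.rpow_natCast ((2:ℝ) ^ α) j]
          rw [← Real.rpow_mul (by norm_num : (0:ℝ) ≤ 2),
            ← Real.rpow_mul (by norm_num : (0:ℝ) ≤ 2),
            ← Real.rpow_mul (by norm_num : (0:ℝ) ≤ 2)]
          rw [hDdef]
          rw [show ε ^ (-α - 2) * (R₀ ^ (-α - 2) * 2 ^ ((j:ℝ) * (-α - 2))) *
              (δ * (R₀ ^ (2 * α + 2) * 2 ^ ((((j:ℕ) + 1 : ℕ) : ℝ) * (2 * α + 2)))) =
              δ * ε ^ (-α - 2) * (R₀ ^ (-α - 2) * R₀ ^ (2 * α + 2)) *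
              (2 ^ ((j:ℝ) * (-α - 2)) * 2 ^ ((((j:ℕ) + 1 : ℕ) : ℝ) * (2 * α + 2))) from by
                push_cast; ring]
          rw [← Real.rpow_add hR₀0, ← Real.rpow_add two_pos]
          rw [show (-α - 2) + (2 * α + 2) = α from by ring]
          rw [show ((j:ℝ) * (-α - 2) + ((((j:ℕ) + 1 : ℕ) : ℝ)) * (2 * α + 2)) =
              (2 * α + 2) + α * (j:ℝ) from by push_cast; ring]
          rw [Real.rpow_add two_pos]
          ring
  have hsum : ∑ j ∈ Finset.range N, c (R₀ * 2 ^ j) *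
      (μ (Metric.ball x₀ (R₀ * 2 ^ (j + 1)))).toReal ≤ D * ((2 ^ α) ^ N) / (2 ^ α - 1) := by
    calc ∑ j ∈ Finset.range N, c (R₀ * 2 ^ j) *
        (μ (Metric.ball x₀ (R₀ * 2 ^ (j + 1)))).toReal
        ≤ ∑ j ∈ Finset.range N, D * (2 ^ α) ^ j := Finset.sum_le_sum fun j _ => hterm j
      _ = D * (((2 ^ α) ^ N - 1) / (2 ^ α - 1)) := by
          rw [← Finset.mul_sum, geom_sum_eq (ne_of_gt h2α)]
      _ ≤ D * ((2 ^ α) ^ N / (2 ^ α - 1)) := by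
          apply mul_le_mul_of_nonneg_left _ hD0
          exact (div_le_div_iff_of_pos_right h2α0).mpr (by linarith)
      _ = D * ((2 ^ α) ^ N) / (2 ^ α - 1) := by ring
  -- bound (2^α)^N by Q^α
  have h2Nα : ((2:ℝ) ^ α) ^ N ≤ 2 ^ α * Q ^ α / R₀ ^ α := by
    have h2N : (2:ℝ) ^ N ≤ 2 * Q / R₀ := by
      rw [le_div_iff₀ hR₀0]; linarith
    have h1 : ((2:ℝ) ^ α) ^ N = ((2:ℝ) ^ N) ^ α := by
      rw [← Real.rpow_natCast ((2:ℝ) ^ α) N, ← Real.rpow_natCast 2 N,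
        ← Real.rpow_mul (by norm_num : (0:ℝ) ≤ 2),
        ← Real.rpow_mul (by norm_num : (0:ℝ) ≤ 2)]
      ring_nf
    rw [h1]
    calc ((2:ℝ) ^ N) ^ α ≤ (2 * Q / R₀) ^ α :=
          Real.rpow_le_rpow (by positivity) h2N hα.le
      _ = 2 ^ α * Q ^ α / R₀ ^ α := by
          rw [Real.div_rpow (by positivity) hR₀0.le, Real.mul_rpow (by norm_num) hQ0.le]
  set E : ℝ := δ * (ε ^ (-α - 2) * 2 ^ (3 * α + 2) / (2 ^ α - 1)) with hEdef
  have hE0 : 0 ≤ E := by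
    apply mul_nonneg hδ.le
    apply div_nonneg _ h2α0.le
    exact mul_nonneg (Real.rpow_pos_of_pos hε _).le (Real.rpow_pos_of_pos two_pos _).le
  have hpow23 : (2:ℝ) ^ (2 * α + 2) * 2 ^ α = 2 ^ (3 * α + 2) := by
    rw [← Real.rpow_add two_pos]; ring_nf
  have hRα : R₀ ^ α ≠ 0 := ne_of_gt (Real.rpow_pos_of_pos hR₀0 _)
  have hDE : D * (2 ^ α * Q ^ α / R₀ ^ α) / (2 ^ α - 1) = E * Q ^ α := by
    rw [hDdef, hEdef, ← hpow23]
    field_simp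
  have hIle : ∫ x in Metric.ball x₀ Q, g x ∂μ ≤ M + E * Q ^ α := by
    have hfinal : D * ((2 ^ α) ^ N) / (2 ^ α - 1) ≤ E * Q ^ α := by
      rw [← hDE]
      rw [div_eq_mul_inv, div_eq_mul_inv]
      exact mul_le_mul_of_nonneg_right (mul_le_mul_of_nonneg_left h2Nα hD0)
        (inv_nonneg.mpr h2α0.le)
    calc ∫ x in Metric.ball x₀ Q, g x ∂μ
        ≤ ∫ x in Metric.ball x₀ (R₀ * 2 ^ N), g x ∂μ := hmono
      _ ≤ M + ∑ j ∈ Finset.range N, c (R₀ * 2 ^ j) *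
          (μ (Metric.ball x₀ (R₀ * 2 ^ (j + 1)))).toReal := hkey
      _ ≤ M + E * Q ^ α := by linarith
  -- final assembly
  have hr1 : (0:ℝ) < 1 + ε * Q := by positivity
  have hw0 : (0:ℝ) ≤ (1 + ε * Q) ^ (-α) := Real.rpow_nonneg hr1.le _
  have hQε : (1 + ε * Q) ^ (-α) * Q ^ α ≤ ε ^ (-α) := by
    have hd : Q / (1 + ε * Q) ≤ 1 / ε := by
      rw [div_le_div_iff₀ hr1 hε]; nlinarith
    calc (1 + ε * Q) ^ (-α) * Q ^ α = (Q / (1 + ε * Q)) ^ α := by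
          rw [Real.div_rpow hQ0.le hr1.le, Real.rpow_neg hr1.le, inv_mul_eq_div]
      _ ≤ (1 / ε) ^ α := Real.rpow_le_rpow (by positivity) hd hα.le
      _ = ε ^ (-α) := by
          rw [one_div, ← Real.rpow_neg_one ε, ← Real.rpow_mul hε.le]
          ring_nf
  have hεadd : ε ^ (-α) * ε ^ (-α - 2) = ε ^ (-(2 * α + 2)) := by
    rw [← Real.rpow_add hε]; ring_nf
  have hEK : ε ^ (-α) * E = δ * K := by
    rw [hEdef, hKdef, ← hεadd]; ring
  have hδK : δ * K = η / 2 := div_mul_cancel₀ _ (ne_of_gt hK0)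
  have hI0 : 0 ≤ ∫ x in Metric.ball x₀ Q, g x ∂μ :=
    setIntegral_nonneg Metric.isOpen_ball.measurableSet (fun x _ => hg0 x)
  rw [Real.dist_eq, sub_zero, abs_of_nonneg (mul_nonneg hw0 hI0)]
  have hstep : (1 + ε * Q) ^ (-α) * ∫ x in Metric.ball x₀ Q, g x ∂μ ≤
      (1 + ε * Q) ^ (-α) * M + E * ((1 + ε * Q) ^ (-α) * Q ^ α) := by
    calc (1 + ε * Q) ^ (-α) * ∫ x in Metric.ball x₀ Q, g x ∂μ
        ≤ (1 + ε * Q) ^ (-α) * (M + E * Q ^ α) := mul_le_mul_of_nonneg_left hIle hw0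
      _ = (1 + ε * Q) ^ (-α) * M + E * ((1 + ε * Q) ^ (-α) * Q ^ α) := by ring
  have hsecond : E * ((1 + ε * Q) ^ (-α) * Q ^ α) ≤ η / 2 := by
    calc E * ((1 + ε * Q) ^ (-α) * Q ^ α) ≤ E * ε ^ (-α) :=
          mul_le_mul_of_nonneg_left hQε hE0
      _ = δ * K := by rw [← hEK]; ring
      _ = η / 2 := hδK
  calc (1 + ε * Q) ^ (-α) * ∫ x in Metric.ball x₀ Q, g x ∂μ
      ≤ (1 + ε * Q) ^ (-α) * M + E * ((1 + ε * Q) ^ (-α) * Q ^ α) := hstep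
    _ < η / 2 + η / 2 := by
        apply add_lt_add_of_lt_of_le hQsmall hsecond
    _ = η := by ring
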